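/- For every shape ξ>0 and scale β>0, the Fisher information of the GPD model satisfies ∫₀^∞ Λ_{ξ,β}(x)·Λ_{ξ,β}(x)ᵀ · f_{ξ,β}(x) dx = (1/((2ξ+1)(ξ+1))) · [[2, 1/β],[1/β, (ξ+1)/β²]], and in particular this integral is finite. -/

import Mathlib

open MeasureTheory Real Set

/-- Density of the generalized Pareto distribution GPD(ξ,β), threshold μ = 0. -/
noncomputable def gpdDensity (ξ β x : ℝ) : ℝ :=
  if x < 0 then 0 else (1 / β) * (1 + ξ * x / β) ^ (-1 / ξ - 1)

/-- Scores (L₂-derivative) of the GPD model, with z = x/β. -/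
noncomputable def gpdScores (ξ β x : ℝ) : Fin 2 → ℝ :=
  ![1 / ξ ^ 2 * Real.log (1 + ξ * (x / β)) - (ξ + 1) / ξ * ((x / β) / (1 + ξ * (x / β))),
    -(1 / β) + (ξ + 1) / β * ((x / β) / (1 + ξ * (x / β)))]

/-- Fisher information matrix of the GPD model. -/
noncomputable def fisherGPD (ξ β : ℝ) : Matrix (Fin 2) (Fin 2) ℝ :=
  (1 / ((2 * ξ + 1) * (ξ + 1))) • !![2, 1 / β; 1 / β, (ξ + 1) / β ^ 2]

section GPDAux

open Filter Topology

lemma gpd_aux0 (p : ℝ) (hp : p < 0) : Tendsto (fun t : ℝ => t ^ p) atTop (𝓝 0) := by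
  have := tendsto_rpow_neg_atTop (show (0:ℝ) < -p by linarith)
  simpa using this

lemma gpd_aux1 (p : ℝ) (hp : p < 0) : Tendsto (fun t : ℝ => t ^ p * Real.log t) atTop (𝓝 0) := by
  have h := (isLittleO_log_rpow_atTop (show (0:ℝ) < -p by linarith)).tendsto_div_nhds_zero
  refine h.congr' ?_
  filter_upwards [eventually_gt_atTop (0:ℝ)] with t ht
  rw [div_eq_mul_inv, ← Real.rpow_neg ht.le, neg_neg, mul_comm]

lemma gpd_aux2 (p : ℝ) (hp : p < 0) :
    Tendsto (fun t : ℝ => t ^ p * Real.log t ^ 2) atTop (𝓝 0) := by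
  have h := (isLittleO_log_rpow_rpow_atTop (2:ℝ)
    (show (0:ℝ) < -p by linarith)).tendsto_div_nhds_zero
  refine h.congr' ?_
  filter_upwards [eventually_gt_atTop (0:ℝ)] with t ht
  rw [div_eq_mul_inv, ← Real.rpow_neg ht.le, neg_neg, mul_comm,
    show (2:ℝ) = ((2:ℕ):ℝ) by norm_num, Real.rpow_natCast]

noncomputable def gpdU (ξ β x : ℝ) : ℝ := 1 + ξ * x / β

noncomputable def gpdF (ξ β : ℝ) (d0 d1 d2 d3 d4 d5 : ℝ) (x : ℝ) : ℝ :=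
  d0 * gpdU ξ β x ^ (-1 / ξ)
  + d1 * gpdU ξ β x ^ (-1 / ξ - 1)
  + d2 * gpdU ξ β x ^ (-1 / ξ - 2)
  + d3 * (gpdU ξ β x ^ (-1 / ξ) * Real.log (gpdU ξ β x))
  + d4 * (gpdU ξ β x ^ (-1 / ξ - 1) * Real.log (gpdU ξ β x))
  + d5 * (gpdU ξ β x ^ (-1 / ξ) * Real.log (gpdU ξ β x) ^ 2)

noncomputable def gpdG (ξ β : ℝ) (d0 d1 d2 d3 d4 d5 : ℝ) (x : ℝ) : ℝ :=
  (ξ / β) * (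
    d0 * ((-1 / ξ) * (gpdU ξ β x ^ (-1 / ξ) / gpdU ξ β x))
  + d1 * ((-1 / ξ - 1) * (gpdU ξ β x ^ (-1 / ξ) / gpdU ξ β x ^ (2:ℕ)))
  + d2 * ((-1 / ξ - 2) * (gpdU ξ β x ^ (-1 / ξ) / gpdU ξ β x ^ (3:ℕ)))
  + d3 * ((-1 / ξ) * (gpdU ξ β x ^ (-1 / ξ) / gpdU ξ β x) * Real.log (gpdU ξ β x)
      + gpdU ξ β x ^ (-1 / ξ) / gpdU ξ β x)
  + d4 * ((-1 / ξ - 1) * (gpdU ξ β x ^ (-1 / ξ) / gpdU ξ β x ^ (2:ℕ)) * Real.log (gpdU ξ β x)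
      + gpdU ξ β x ^ (-1 / ξ) / gpdU ξ β x ^ (2:ℕ))
  + d5 * ((-1 / ξ) * (gpdU ξ β x ^ (-1 / ξ) / gpdU ξ β x) * Real.log (gpdU ξ β x) ^ 2
      + 2 * ((gpdU ξ β x ^ (-1 / ξ) / gpdU ξ β x) * Real.log (gpdU ξ β x))))

lemma hasDerivAt_gpdF (ξ β : ℝ) (d0 d1 d2 d3 d4 d5 : ℝ) {x : ℝ}
    (hx : 0 < gpdU ξ β x) : HasDerivAt (gpdF ξ β d0 d1 d2 d3 d4 d5) (gpdG ξ β d0 d1 d2 d3 d4 d5 x) x := by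
  have hU : HasDerivAt (gpdU ξ β) (ξ / β) x := by
    have h := (((hasDerivAt_id x).const_mul ξ).div_const β).const_add 1
    simp only [id, mul_one] at h
    exact h
  have hne : gpdU ξ β x ≠ 0 := hx.ne'
  have hA : ∀ p : ℝ, HasDerivAt (fun y => gpdU ξ β y ^ p)
      (p * gpdU ξ β x ^ (p - 1) * (ξ / β)) x := by
    intro p
    have := hU.rpow_const (p := p) (Or.inl hne)
    convert this using 1
    ring
  have hL : HasDerivAt (fun y => Real.log (gpdU ξ β y)) (ξ / β / gpdU ξ β x) x := hU.log hne
  have h0 := (hA (-1/ξ)).const_mul d0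
  have h1 := (hA (-1/ξ-1)).const_mul d1
  have h2 := (hA (-1/ξ-2)).const_mul d2
  have h3 := ((hA (-1/ξ)).mul hL).const_mul d3
  have h4 := ((hA (-1/ξ-1)).mul hL).const_mul d4
  have h5 := ((hA (-1/ξ)).mul (hL.pow 2)).const_mul d5
  have H := ((((h0.add h1).add h2).add h3).add h4).add h5
  have e1 : gpdU ξ β x ^ (-1/ξ - 1) = gpdU ξ β x ^ (-1/ξ) / gpdU ξ β x := by
    rw [Real.rpow_sub hx, Real.rpow_one]
  have e2 : gpdU ξ β x ^ (-1/ξ - 1 - 1) = gpdU ξ β x ^ (-1/ξ) / gpdU ξ β x ^ (2:ℕ) := by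
    rw [show (-1/ξ - 1 - 1 : ℝ) = -1/ξ - ((2:ℕ):ℝ) by push_cast; ring,
      Real.rpow_sub hx, Real.rpow_natCast]
  have e4 : gpdU ξ β x ^ (-1/ξ - 2 - 1) = gpdU ξ β x ^ (-1/ξ) / gpdU ξ β x ^ (3:ℕ) := by
    rw [show (-1/ξ - 2 - 1 : ℝ) = -1/ξ - ((3:ℕ):ℝ) by push_cast; ring,
      Real.rpow_sub hx, Real.rpow_natCast]
  refine H.congr_deriv ?_
  rw [gpdG, e1, e2, e4]
  simp only [Pi.pow_apply]
  push_cast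
  ring

lemma gpdU_pos {ξ β x : ℝ} (hξ : 0 < ξ) (hβ : 0 < β) (hx : 0 ≤ x) : 0 < gpdU ξ β x := by
  have : 0 ≤ ξ * x / β := div_nonneg (mul_nonneg hξ.le hx) hβ.le
  unfold gpdU; linarith

lemma tendsto_gpdU (ξ β : ℝ) (hξ : 0 < ξ) (hβ : 0 < β) :
    Tendsto (gpdU ξ β) atTop atTop := by
  apply tendsto_atTop_add_const_left
  exact (tendsto_id.const_mul_atTop hξ).atTop_div_const hβ

lemma tendsto_gpdF (ξ β : ℝ) (hξ : 0 < ξ) (hβ : 0 < β) (d0 d1 d2 d3 d4 d5 : ℝ) :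
    Tendsto (gpdF ξ β d0 d1 d2 d3 d4 d5) atTop (𝓝 0) := by
  have hU := tendsto_gpdU ξ β hξ hβ
  have hp1 : (-1/ξ : ℝ) < 0 := div_neg_of_neg_of_pos (by norm_num) hξ
  have hp2 : (-1/ξ - 1 : ℝ) < 0 := by linarith
  have hp3 : (-1/ξ - 2 : ℝ) < 0 := by linarith
  have h0 : Tendsto (fun x => gpdU ξ β x ^ (-1/ξ)) atTop (𝓝 0) := (gpd_aux0 _ hp1).comp hU
  have h1 : Tendsto (fun x => gpdU ξ β x ^ (-1/ξ - 1)) atTop (𝓝 0) := (gpd_aux0 _ hp2).comp hU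
  have h2 : Tendsto (fun x => gpdU ξ β x ^ (-1/ξ - 2)) atTop (𝓝 0) := (gpd_aux0 _ hp3).comp hU
  have h3 : Tendsto (fun x => gpdU ξ β x ^ (-1/ξ) * Real.log (gpdU ξ β x)) atTop (𝓝 0) :=
    (gpd_aux1 _ hp1).comp hU
  have h4 : Tendsto (fun x => gpdU ξ β x ^ (-1/ξ - 1) * Real.log (gpdU ξ β x)) atTop (𝓝 0) :=
    (gpd_aux1 _ hp2).comp hU
  have h5 : Tendsto (fun x => gpdU ξ β x ^ (-1/ξ) * Real.log (gpdU ξ β x) ^ 2) atTop (𝓝 0) :=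
    (gpd_aux2 _ hp1).comp hU
  have H0 := h0.const_mul d0
  have H1 := h1.const_mul d1
  have H2 := h2.const_mul d2
  have H3 := h3.const_mul d3
  have H4 := h4.const_mul d4
  have H5 := h5.const_mul d5
  have H := ((((H0.add H1).add H2).add H3).add H4).add H5
  simp only [mul_zero, add_zero] at H
  exact H

lemma gpdF_zero (ξ β : ℝ) (d0 d1 d2 d3 d4 d5 : ℝ) :
    gpdF ξ β d0 d1 d2 d3 d4 d5 0 = d0 + d1 + d2 := by
  have : gpdU ξ β 0 = 1 := by simp [gpdU]
  simp [gpdF, this]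

lemma gpd_key2 (ξ β : ℝ) (hξ : 0 < ξ) (hβ : 0 < β) (d0 d1 d2 d3 d4 d5 : ℝ) (s : ℝ → ℝ)
    (hs : ∀ x, 0 ≤ x → s x = gpdG ξ β d0 d1 d2 d3 d4 d5 x)
    (hint : IntegrableOn s (Ioi 0)) :
    ∫ x in Ioi (0:ℝ), s x = -(d0 + d1 + d2) := by
  have hderiv : ∀ x ∈ Ici (0:ℝ), HasDerivAt (gpdF ξ β d0 d1 d2 d3 d4 d5) (s x) x := by
    intro x hx
    rw [hs x hx]
    exact hasDerivAt_gpdF ξ β d0 d1 d2 d3 d4 d5 (gpdU_pos hξ hβ hx)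
  have htend := tendsto_gpdF ξ β hξ hβ d0 d1 d2 d3 d4 d5
  rw [integral_Ioi_of_hasDerivAt_of_tendsto' hderiv hint htend,
    gpdF_zero ξ β d0 d1 d2 d3 d4 d5]
  ring

lemma gpd_key (ξ β : ℝ) (hξ : 0 < ξ) (hβ : 0 < β) (d0 d1 d2 d3 d4 d5 : ℝ) (s : ℝ → ℝ)
    (hs : ∀ x, 0 ≤ x → s x = gpdG ξ β d0 d1 d2 d3 d4 d5 x)
    (hpos : ∀ x ∈ Ioi (0:ℝ), 0 ≤ s x) :
    IntegrableOn s (Ioi 0) ∧ ∫ x in Ioi (0:ℝ), s x = -(d0 + d1 + d2) := by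
  have hderiv : ∀ x ∈ Ici (0:ℝ), HasDerivAt (gpdF ξ β d0 d1 d2 d3 d4 d5) (s x) x := by
    intro x hx
    rw [hs x hx]
    exact hasDerivAt_gpdF ξ β d0 d1 d2 d3 d4 d5 (gpdU_pos hξ hβ hx)
  have htend := tendsto_gpdF ξ β hξ hβ d0 d1 d2 d3 d4 d5
  have hint : IntegrableOn s (Ioi 0) :=
    integrableOn_Ioi_deriv_of_nonneg' hderiv hpos htend
  exact ⟨hint, gpd_key2 ξ β hξ hβ d0 d1 d2 d3 d4 d5 s hs hint⟩

lemma gpdDensity_nonneg {ξ β : ℝ} (hξ : 0 < ξ) (hβ : 0 < β) (x : ℝ) :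
    0 ≤ gpdDensity ξ β x := by
  unfold gpdDensity
  split
  · exact le_refl 0
  · rename_i h
    have hu : (0:ℝ) < 1 + ξ * x / β := gpdU_pos hξ hβ (not_lt.1 h)
    exact mul_nonneg (by positivity) (Real.rpow_nonneg hu.le _)

lemma gpd_heq00 (ξ β : ℝ) (hξ : 0 < ξ) (hβ : 0 < β) :
    ∀ x, 0 ≤ x → gpdScores ξ β x 0 * gpdScores ξ β x 0 * gpdDensity ξ β x
      = gpdG ξ β (-(ξ^2+1)/ξ^4) (2*(ξ^2+ξ+1)/(ξ^4*(ξ+1))) (-(ξ+1)^2/(ξ^4*(2*ξ+1)))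
          (2/ξ^4) (-2/ξ^4) (-1/ξ^4) x := by
  intro x hx
  have hu : 0 < gpdU ξ β x := gpdU_pos hξ hβ hx
  have hξ1 : ξ + 1 ≠ 0 := by linarith
  have hξ2 : 2*ξ + 1 ≠ 0 := by linarith
  have h1 : 1 + ξ * (x / β) = gpdU ξ β x := by rw [gpdU]; ring
  have e1 : gpdU ξ β x ^ (-1/ξ - 1 : ℝ) = gpdU ξ β x ^ (-1/ξ) / gpdU ξ β x := by
    rw [Real.rpow_sub hu, Real.rpow_one]
  have hZ : x / β / gpdU ξ β x = (gpdU ξ β x - 1) / (ξ * gpdU ξ β x) := by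
    rw [div_eq_div_iff hu.ne' (mul_ne_zero hξ.ne' hu.ne'), gpdU]
    field_simp
    ring
  simp only [gpdScores, gpdDensity, if_neg (not_lt.mpr hx), Matrix.cons_val_zero]
  rw [h1, hZ, show (1 + ξ * x / β) = gpdU ξ β x from rfl, e1, gpdG]
  field_simp
  ring

lemma gpd_heq01 (ξ β : ℝ) (hξ : 0 < ξ) (hβ : 0 < β) :
    ∀ x, 0 ≤ x → gpdScores ξ β x 0 * gpdScores ξ β x 1 * gpdDensity ξ β x
      = gpdG ξ β (1/(β*ξ^3)) (-(ξ^2+2*ξ+2)/(β*ξ^3*(ξ+1))) ((ξ+1)^2/(β*ξ^3*(2*ξ+1)))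
          (-1/(β*ξ^3)) (1/(β*ξ^3)) 0 x := by
  intro x hx
  have hu : 0 < gpdU ξ β x := gpdU_pos hξ hβ hx
  have hξ1 : ξ + 1 ≠ 0 := by linarith
  have hξ2 : 2*ξ + 1 ≠ 0 := by linarith
  have h1 : 1 + ξ * (x / β) = gpdU ξ β x := by rw [gpdU]; ring
  have e1 : gpdU ξ β x ^ (-1/ξ - 1 : ℝ) = gpdU ξ β x ^ (-1/ξ) / gpdU ξ β x := by
    rw [Real.rpow_sub hu, Real.rpow_one]
  have hZ : x / β / gpdU ξ β x = (gpdU ξ β x - 1) / (ξ * gpdU ξ β x) := by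
    rw [div_eq_div_iff hu.ne' (mul_ne_zero hξ.ne' hu.ne'), gpdU]
    field_simp
    ring
  simp only [gpdScores, gpdDensity, if_neg (not_lt.mpr hx), Matrix.cons_val_zero,
    Matrix.cons_val_one, Matrix.head_cons]
  rw [h1, hZ, show (1 + ξ * x / β) = gpdU ξ β x from rfl, e1, gpdG]
  field_simp
  ring

lemma gpd_heq11 (ξ β : ℝ) (hξ : 0 < ξ) (hβ : 0 < β) :
    ∀ x, 0 ≤ x → gpdScores ξ β x 1 * gpdScores ξ β x 1 * gpdDensity ξ β x
      = gpdG ξ β (-1/(β^2*ξ^2)) (2/(β^2*ξ^2)) (-(ξ+1)^2/(β^2*ξ^2*(2*ξ+1))) 0 0 0 x := by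
  intro x hx
  have hu : 0 < gpdU ξ β x := gpdU_pos hξ hβ hx
  have hξ1 : ξ + 1 ≠ 0 := by linarith
  have hξ2 : 2*ξ + 1 ≠ 0 := by linarith
  have h1 : 1 + ξ * (x / β) = gpdU ξ β x := by rw [gpdU]; ring
  have e1 : gpdU ξ β x ^ (-1/ξ - 1 : ℝ) = gpdU ξ β x ^ (-1/ξ) / gpdU ξ β x := by
    rw [Real.rpow_sub hu, Real.rpow_one]
  have hZ : x / β / gpdU ξ β x = (gpdU ξ β x - 1) / (ξ * gpdU ξ β x) := by
    rw [div_eq_div_iff hu.ne' (mul_ne_zero hξ.ne' hu.ne'), gpdU]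
    field_simp
    ring
  simp only [gpdScores, gpdDensity, if_neg (not_lt.mpr hx), Matrix.cons_val_one,
    Matrix.head_cons, Matrix.cons_val_zero]
  rw [h1, hZ, show (1 + ξ * x / β) = gpdU ξ β x from rfl, e1, gpdG]
  field_simp
  ring

lemma gpdG_comb (ξ β a0 a1 a2 a3 a4 a5 b0 b1 b2 b3 b4 b5 c0 c1 c2 c3 c4 c5 x : ℝ) :
    gpdG ξ β (a0+2*b0+c0) (a1+2*b1+c1) (a2+2*b2+c2) (a3+2*b3+c3) (a4+2*b4+c4) (a5+2*b5+c5) x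
      = gpdG ξ β a0 a1 a2 a3 a4 a5 x + 2 * gpdG ξ β b0 b1 b2 b3 b4 b5 x
        + gpdG ξ β c0 c1 c2 c3 c4 c5 x := by
  simp only [gpdG]; ring

lemma gpd_heqS (ξ β : ℝ) (hξ : 0 < ξ) (hβ : 0 < β) :
    ∀ x, 0 ≤ x → (gpdScores ξ β x 0 + gpdScores ξ β x 1)
        * (gpdScores ξ β x 0 + gpdScores ξ β x 1) * gpdDensity ξ β x
      = gpdG ξ β (-(ξ^2+1)/ξ^4 + 2*(1/(β*ξ^3)) + -1/(β^2*ξ^2))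
          (2*(ξ^2+ξ+1)/(ξ^4*(ξ+1)) + 2*(-(ξ^2+2*ξ+2)/(β*ξ^3*(ξ+1))) + 2/(β^2*ξ^2))
          (-(ξ+1)^2/(ξ^4*(2*ξ+1)) + 2*((ξ+1)^2/(β*ξ^3*(2*ξ+1))) + -(ξ+1)^2/(β^2*ξ^2*(2*ξ+1)))
          (2/ξ^4 + 2*(-1/(β*ξ^3)) + 0) (-2/ξ^4 + 2*(1/(β*ξ^3)) + 0) (-1/ξ^4 + 2*0 + 0) x := by
  intro x hx
  have h : (gpdScores ξ β x 0 + gpdScores ξ β x 1)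
        * (gpdScores ξ β x 0 + gpdScores ξ β x 1) * gpdDensity ξ β x
      = gpdScores ξ β x 0 * gpdScores ξ β x 0 * gpdDensity ξ β x
        + 2 * (gpdScores ξ β x 0 * gpdScores ξ β x 1 * gpdDensity ξ β x)
        + gpdScores ξ β x 1 * gpdScores ξ β x 1 * gpdDensity ξ β x := by ring
  rw [h, gpd_heq00 ξ β hξ hβ x hx, gpd_heq01 ξ β hξ hβ x hx, gpd_heq11 ξ β hξ hβ x hx,
    ← gpdG_comb]

end GPDAux

/-- For every ξ>0, β>0, the Fisher information integral
∫₀^∞ Λ Λᵀ f dx (entrywise) is finite and equals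
(1/((2ξ+1)(ξ+1))) · [[2, 1/β],[1/β, (ξ+1)/β²]]. -/
theorem gpd_fisher_information (ξ β : ℝ) (hξ : 0 < ξ) (hβ : 0 < β) :
    (∀ i j : Fin 2, IntegrableOn
      (fun x => gpdScores ξ β x i * gpdScores ξ β x j * gpdDensity ξ β x) (Ioi 0)) ∧
    (∀ i j : Fin 2,
      ∫ x in Ioi (0 : ℝ), gpdScores ξ β x i * gpdScores ξ β x j * gpdDensity ξ β x
        = fisherGPD ξ β i j) := by
  have hξ1 : ξ + 1 ≠ 0 := by linarith
  have hξ2 : 2*ξ + 1 ≠ 0 := by linarith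
  obtain ⟨hi00, hv00⟩ := gpd_key ξ β hξ hβ _ _ _ _ _ _
    (fun x => gpdScores ξ β x 0 * gpdScores ξ β x 0 * gpdDensity ξ β x)
    (gpd_heq00 ξ β hξ hβ)
    (fun x _ => mul_nonneg (mul_self_nonneg _) (gpdDensity_nonneg hξ hβ x))
  obtain ⟨hi11, hv11⟩ := gpd_key ξ β hξ hβ _ _ _ _ _ _
    (fun x => gpdScores ξ β x 1 * gpdScores ξ β x 1 * gpdDensity ξ β x)
    (gpd_heq11 ξ β hξ hβ)
    (fun x _ => mul_nonneg (mul_self_nonneg _) (gpdDensity_nonneg hξ hβ x))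
  obtain ⟨hiSS, _⟩ := gpd_key ξ β hξ hβ _ _ _ _ _ _
    (fun x => (gpdScores ξ β x 0 + gpdScores ξ β x 1)
        * (gpdScores ξ β x 0 + gpdScores ξ β x 1) * gpdDensity ξ β x)
    (gpd_heqS ξ β hξ hβ)
    (fun x _ => mul_nonneg (mul_self_nonneg _) (gpdDensity_nonneg hξ hβ x))
  have hi01 : IntegrableOn
      (fun x => gpdScores ξ β x 0 * gpdScores ξ β x 1 * gpdDensity ξ β x) (Ioi 0) := by
    have h := ((hiSS.sub hi00).sub hi11).div_const 2
    refine h.congr (Filter.Eventually.of_forall fun x => ?_)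
    simp only [Pi.sub_apply]
    ring
  have hv01 := gpd_key2 ξ β hξ hβ _ _ _ _ _ _
    (fun x => gpdScores ξ β x 0 * gpdScores ξ β x 1 * gpdDensity ξ β x)
    (gpd_heq01 ξ β hξ hβ) hi01
  have hi10 : IntegrableOn
      (fun x => gpdScores ξ β x 1 * gpdScores ξ β x 0 * gpdDensity ξ β x) (Ioi 0) :=
    hi01.congr (Filter.Eventually.of_forall (fun x => by ring))
  have hv10 : ∫ x in Ioi (0:ℝ), gpdScores ξ β x 1 * gpdScores ξ β x 0 * gpdDensity ξ β x
      = ∫ x in Ioi (0:ℝ), gpdScores ξ β x 0 * gpdScores ξ β x 1 * gpdDensity ξ β x := by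
    congr 1
    funext x
    ring
  have num00 : -(-(ξ^2+1)/ξ^4 + 2*(ξ^2+ξ+1)/(ξ^4*(ξ+1)) + -(ξ+1)^2/(ξ^4*(2*ξ+1)))
      = fisherGPD ξ β 0 0 := by
    simp [fisherGPD]
    field_simp
    ring
  have num01 : -(1/(β*ξ^3) + -(ξ^2+2*ξ+2)/(β*ξ^3*(ξ+1)) + (ξ+1)^2/(β*ξ^3*(2*ξ+1)))
      = fisherGPD ξ β 0 1 := by
    simp [fisherGPD]
    field_simp
    ring
  have num10 : -(1/(β*ξ^3) + -(ξ^2+2*ξ+2)/(β*ξ^3*(ξ+1)) + (ξ+1)^2/(β*ξ^3*(2*ξ+1)))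
      = fisherGPD ξ β 1 0 := by
    simp [fisherGPD]
    field_simp
    ring
  have num11 : -(-1/(β^2*ξ^2) + 2/(β^2*ξ^2) + -(ξ+1)^2/(β^2*ξ^2*(2*ξ+1)))
      = fisherGPD ξ β 1 1 := by
    simp [fisherGPD]
    field_simp
    ring
  constructor
  · intro i j
    fin_cases i <;> fin_cases j
    · exact hi00
    · exact hi01
    · exact hi10
    · exact hi11
  · intro i j
    fin_cases i <;> fin_cases j
    · exact hv00.trans num00
    · exact hv01.trans num01
    · exact hv10.trans (hv01.trans num10)
    · exact hv11.trans num11
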